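/- If Q is the permutation matrix of σ = (0 i_0)(1 i_1)···(r−1 i_{r−1}) composed left to right as transpositions T_{0,i_0}···T_{r−1,i_{r−1}} with j ≤ i_j and i_0 < i_1 < ... < i_{r−1}, then for each j < r, row j of Q·M equals row i_j of M. -/

import Mathlib

open Matrix

private lemma swap_prod_fix {m : Type*} [DecidableEq m] (L : List (Equiv.Perm m)) (x : m)
    (h : ∀ p ∈ L, p x = x) : L.prod x = x := by
  induction L with
  | nil => simp
  | cons p t ih =>
    simp only [List.prod_cons, Equiv.Perm.mul_apply]
    rw [ih (fun q hq => h q (List.mem_cons_of_mem _ hq)), h p List.mem_cons_self]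

private lemma swap_prod_eval {m : ℕ} : ∀ (r : ℕ) (a b : Fin r → Fin m),
    StrictMono a → StrictMono b → (∀ j, a j ≤ b j) →
    ∀ j : Fin r, (List.ofFn fun k => Equiv.swap (a k) (b k)).prod (a j) = b j := by
  intro r
  induction r with
  | zero => intro a b _ _ _ j; exact j.elim0
  | succ r ih =>
    intro a b ha hb hab j
    rw [List.ofFn_succ, List.prod_cons]
    rcases Fin.eq_zero_or_eq_succ j with rfl | ⟨j', rfl⟩
    · have hfix : (List.ofFn fun k : Fin r =>
          Equiv.swap (a k.succ) (b k.succ)).prod (a 0) = a 0 := by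
        apply swap_prod_fix
        intro p hp
        simp only [List.mem_ofFn] at hp
        obtain ⟨k, rfl⟩ := hp
        apply Equiv.swap_apply_of_ne_of_ne
        · exact (ha (Fin.succ_pos k)).ne
        · exact ((ha (Fin.succ_pos k)).trans_le (hab k.succ)).ne
      simp only [Equiv.Perm.mul_apply, hfix, Equiv.swap_apply_left]
    · have := ih (fun k => a k.succ) (fun k => b k.succ)
        (ha.comp (Fin.strictMono_succ)) (hb.comp (Fin.strictMono_succ))
        (fun k => hab k.succ) j'
      simp only [Equiv.Perm.mul_apply, this]
      apply Equiv.swap_apply_of_ne_of_ne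
      · exact ((hab 0).trans_lt (hb (Fin.succ_pos j'))).ne'
      · exact (hb (Fin.succ_pos j')).ne'

private lemma perm_list_row {K : Type*} [Field K] {m n : ℕ} :
    ∀ (L : List (Equiv.Perm (Fin m))) (M : Matrix (Fin m) (Fin n) K) (i : Fin m) (c : Fin n),
    (((L.map fun p => p.permMatrix K).reverse).prod * M) i c = M (L.prod i) c := by
  intro L
  induction L with
  | nil => intro M i c; simp
  | cons p t ih =>
    intro M i c
    simp only [List.map_cons, List.reverse_cons, List.prod_append, List.prod_cons,
      List.prod_nil, mul_one, List.prod_cons]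
    rw [Matrix.mul_assoc, ih (p.permMatrix K * M) i c]
    rw [Equiv.Perm.permMatrix, PEquiv.toMatrix_toPEquiv_mul]
    simp [Equiv.Perm.mul_apply]

/-- Let `Q` be the product of the transposition matrices
`T_{0,i_0}, T_{1,i_1}, …, T_{r-1,i_{r-1}}` composed left to right (i.e. in the
order in which they are applied to the rows of `M`: `T_{0,i_0}` first), with
`j ≤ i_j` and `i_0 < i_1 < … < i_{r-1}`.  Then for each `j < r`, row `j` of
`Q·M` equals row `i_j` of `M`.  (Each transposition matrix is symmetric, so it
is unambiguous.) -/
theorem cup_stmt19 {K : Type*} [Field K] {m n r : ℕ} (hr : r ≤ m)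
    (M : Matrix (Fin m) (Fin n) K)
    (piv : Fin r → Fin m) (hpiv : StrictMono piv)
    (hle : ∀ j : Fin r, (j : ℕ) ≤ (piv j : ℕ))
    (Q : Matrix (Fin m) (Fin m) K)
    (hQ : Q = ((List.ofFn fun j : Fin r =>
        ((Equiv.swap (Fin.castLE hr j) (piv j)).permMatrix K)).reverse).prod) :
    ∀ j : Fin r, ∀ c : Fin n, (Q * M) (Fin.castLE hr j) c = M (piv j) c := by
  intro j c
  have hmap : (List.ofFn fun j : Fin r =>
      ((Equiv.swap (Fin.castLE hr j) (piv j)).permMatrix K)) =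
      ((List.ofFn fun j : Fin r => Equiv.swap (Fin.castLE hr j) (piv j)).map
        fun p => p.permMatrix K) := by
    rw [List.map_ofFn]; rfl
  rw [hQ, hmap, perm_list_row]
  congr 1
  have hcast : StrictMono (fun j : Fin r => Fin.castLE hr j) :=
    fun a b hab => hab
  have hle' : ∀ j : Fin r, (Fin.castLE hr j) ≤ piv j := fun j => hle j
  exact swap_prod_eval r _ _ hcast hpiv hle' j
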